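/- Let Q(x) = (5/2)^{1/3} cosh(3x/2)^{-2/3} be the quartic gKdV soliton, and let A(x) = (1/3) Q'(x) ∫₀ˣ Q²(s) ds - (2/3) Q³(x). Then A solves the ODE A'' - A + 4Q³A + 4Q³ = 0 on ℝ, A is even, and A decays exponentially at ±∞. -/

import Mathlib

open Real

noncomputable section
namespace QA
def c : ℝ := ((5:ℝ)/2) ^ ((1:ℝ)/3)
def ch (x : ℝ) : ℝ := Real.cosh (3*x/2)
def sh (x : ℝ) : ℝ := Real.sinh (3*x/2)
def q (x : ℝ) : ℝ := c * ch x ^ (-(2:ℝ)/3)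
def q1 (x : ℝ) : ℝ := -(sh x / ch x) * q x
lemma ch_pos (x : ℝ) : 0 < ch x := Real.cosh_pos (3*x/2)
lemma c_pos : 0 < c := Real.rpow_pos_of_pos (by norm_num) _
lemma q_pos (x : ℝ) : 0 < q x := mul_pos c_pos (Real.rpow_pos_of_pos (ch_pos x) _)
lemma sh_sq (x : ℝ) : sh x ^ 2 = ch x ^ 2 - 1 := by
  have := Real.cosh_sq (3*x/2); simp only [ch, sh]; nlinarith [this]
lemma hasDerivAt_ch (x : ℝ) : HasDerivAt ch ((3/2) * sh x) x := by
  show HasDerivAt (fun y => Real.cosh (3*y/2)) ((3/2) * sh x) x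
  have h1 : HasDerivAt (fun y : ℝ => 3*y/2) (3/2) x := by
    simpa using ((hasDerivAt_id x).const_mul (3:ℝ)).div_const 2
  have h2 := h1.cosh
  convert h2 using 1
  simp only [sh]; ring
lemma hasDerivAt_sh (x : ℝ) : HasDerivAt sh ((3/2) * ch x) x := by
  show HasDerivAt (fun y => Real.sinh (3*y/2)) ((3/2) * ch x) x
  have h1 : HasDerivAt (fun y : ℝ => 3*y/2) (3/2) x := by
    simpa using ((hasDerivAt_id x).const_mul (3:ℝ)).div_const 2
  have h2 := h1.sinh
  convert h2 using 1
  simp only [ch]; ring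
lemma hasDerivAt_q (x : ℝ) : HasDerivAt q (q1 x) x := by
  have h3 : HasDerivAt (fun y => ch y ^ (-(2:ℝ)/3))
      ((-(2:ℝ)/3) * ch x ^ (-(2:ℝ)/3 - 1) * ((3/2) * sh x)) x :=
    (Real.hasDerivAt_rpow_const (p := -(2:ℝ)/3) (Or.inl (ch_pos x).ne')).comp x (hasDerivAt_ch x)
  have h4 := h3.const_mul c
  refine h4.congr_deriv (Eq.symm ?_)
  have h5 : ch x ^ (-(2:ℝ)/3 - 1) = ch x ^ (-(2:ℝ)/3) * (ch x)⁻¹ := by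
    rw [show (-(2:ℝ)/3 - 1) = (-(2:ℝ)/3) + (-1) by ring, Real.rpow_add (ch_pos x),
      Real.rpow_neg_one]
  rw [h5]; simp only [q1, q]
  field_simp
lemma qcubed (x : ℝ) : q x ^ 3 * ch x ^ 2 = 5/2 := by
  have h1 : (((5:ℝ)/2) ^ ((1:ℝ)/3)) ^ (3:ℕ) = 5/2 := by
    rw [← Real.rpow_natCast (((5:ℝ)/2) ^ ((1:ℝ)/3)) 3, ← Real.rpow_mul (by norm_num)]
    norm_num
  have h2 : (ch x ^ (-(2:ℝ)/3)) ^ (3:ℕ) = ch x ^ (-(2:ℝ)) := by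
    rw [← Real.rpow_natCast (ch x ^ (-(2:ℝ)/3)) 3, ← Real.rpow_mul (ch_pos x).le]
    norm_num
  have h3 : ch x ^ (-(2:ℝ)) * ch x ^ (2:ℕ) = 1 := by
    rw [← Real.rpow_natCast (ch x) 2, ← Real.rpow_add (ch_pos x)]
    norm_num
  have hq : q x ^ 3 = (((5:ℝ)/2) ^ ((1:ℝ)/3)) ^ (3:ℕ) * (ch x ^ (-(2:ℝ)/3)) ^ (3:ℕ) := by
    simp only [q, c, mul_pow]
  rw [hq, h1, h2, mul_assoc, h3, mul_one]
lemma e2 (x : ℝ) : q x ^ 4 * ch x ^ 2 = 5/2 * q x := by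
  linear_combination q x * qcubed x
lemma hasDerivAt_q1 (x : ℝ) : HasDerivAt q1 (q x - q x ^ 4) x := by
  have h := (((hasDerivAt_sh x).div (hasDerivAt_ch x) (ch_pos x).ne').mul (hasDerivAt_q x)).neg
  have hf : q1 = -(sh / ch * q) := by funext y; simp only [q1, Pi.neg_apply, Pi.mul_apply, Pi.div_apply]; ring
  rw [hf]
  refine h.congr_deriv (Eq.symm ?_)
  have hne : ch x ≠ 0 := (ch_pos x).ne'
  simp only [q1, Pi.div_apply]
  field_simp
  linear_combination (-5 * q x) * sh_sq x + (-2) * e2 x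
lemma energy (x : ℝ) : q1 x ^ 2 = q x ^ 2 - (2/5) * q x ^ 5 := by
  have hne : ch x ≠ 0 := (ch_pos x).ne'
  have e5 : q x ^ 5 * ch x ^ 2 = 5/2 * q x ^ 2 := by linear_combination q x ^ 2 * qcubed x
  simp only [q1]
  field_simp
  linear_combination (5*q x^2) * sh_sq x + 2 * e5

lemma cont_q : Continuous q :=
  continuous_iff_continuousAt.2 fun x => (hasDerivAt_q x).continuousAt

lemma cont_q1 : Continuous q1 :=
  continuous_iff_continuousAt.2 fun x => (hasDerivAt_q1 x).continuousAt

def I (x : ℝ) : ℝ := ∫ s in (0:ℝ)..x, q s ^ 2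

lemma hasDerivAt_I (x : ℝ) : HasDerivAt I (q x ^ 2) x :=
  intervalIntegral.integral_hasDerivAt_right ((cont_q.pow 2).intervalIntegrable 0 x)
    ((cont_q.pow 2).stronglyMeasurableAtFilter _ _) (cont_q.pow 2).continuousAt

lemma cont_I : Continuous I :=
  continuous_iff_continuousAt.2 fun x => (hasDerivAt_I x).continuousAt

lemma ch_even (x : ℝ) : ch (-x) = ch x := by
  simp only [ch]
  rw [show 3*(-x)/2 = -(3*x/2) by ring, Real.cosh_neg]

lemma sh_odd (x : ℝ) : sh (-x) = -sh x := by
  simp only [sh]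
  rw [show 3*(-x)/2 = -(3*x/2) by ring, Real.sinh_neg]

lemma q_even (x : ℝ) : q (-x) = q x := by simp only [q, ch_even]

lemma q1_odd (x : ℝ) : q1 (-x) = -q1 x := by
  simp only [q1, sh_odd, ch_even, q_even]; ring

lemma I_odd (x : ℝ) : I (-x) = -I x := by
  have h := intervalIntegral.integral_comp_neg (a := (0:ℝ)) (b := x) (fun s => q s ^ 2)
  simp only [q_even, neg_zero] at h
  -- h : ∫ s in 0..x, q s ^ 2 = ∫ s in -x..0, q s ^ 2
  have h2 : (∫ s in (-x)..(0:ℝ), q s ^ 2) = -∫ s in (0:ℝ)..(-x), q s ^ 2 :=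
    intervalIntegral.integral_symm 0 (-x)
  simp only [I]
  rw [h2] at h
  linarith

def K : ℝ := c * (2:ℝ) ^ ((2:ℝ)/3)

lemma K_pos : 0 < K := mul_pos c_pos (Real.rpow_pos_of_pos (by norm_num) _)

lemma ch_ge (x : ℝ) : Real.exp (3*|x|/2) / 2 ≤ ch x := by
  have h1 : ch x = Real.cosh (3*|x|/2) := by
    rcases abs_cases x with ⟨h, _⟩ | ⟨h, _⟩
    · rw [h]; rfl
    · rw [h, show 3*(-x)/2 = -(3*x/2) by ring, Real.cosh_neg]; rfl
  rw [h1, Real.cosh_eq]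
  have := Real.exp_pos (-(3*|x|/2))
  linarith

lemma q_le (x : ℝ) : q x ≤ K * Real.exp (-|x|) := by
  have hpos : (0:ℝ) < Real.exp (3*|x|/2) / 2 := by positivity
  have h1 : ch x ^ (-(2:ℝ)/3) ≤ (Real.exp (3*|x|/2) / 2) ^ (-(2:ℝ)/3) :=
    Real.rpow_le_rpow_of_nonpos hpos (ch_ge x) (by norm_num)
  have h2 : (Real.exp (3*|x|/2) / 2) ^ (-(2:ℝ)/3)
      = (2:ℝ)^((2:ℝ)/3) * Real.exp (-|x|) := by
    rw [Real.div_rpow (Real.exp_pos _).le (by norm_num), ← Real.exp_mul,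
      show (3*|x|/2) * (-(2:ℝ)/3) = -|x| by ring,
      show ((2:ℝ)) ^ (-(2:ℝ)/3) = ((2:ℝ)^((2:ℝ)/3))⁻¹ by
        rw [← Real.rpow_neg (by norm_num)]; norm_num,
      div_eq_mul_inv, inv_inv]
    ring
  calc q x = c * ch x ^ (-(2:ℝ)/3) := rfl
    _ ≤ c * ((2:ℝ)^((2:ℝ)/3) * Real.exp (-|x|)) := by
        rw [← h2]; exact mul_le_mul_of_nonneg_left h1 c_pos.le
    _ = K * Real.exp (-|x|) := by rw [K]; ring

lemma abs_sh_le (x : ℝ) : |sh x| ≤ ch x := by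
  have h := sh_sq x
  have h2 := ch_pos x
  rw [abs_le]
  constructor <;> nlinarith

lemma abs_q1_le (x : ℝ) : |q1 x| ≤ q x := by
  have h := abs_sh_le x
  have h2 := ch_pos x
  have h3 := q_pos x
  simp only [q1]
  rw [abs_mul, abs_neg, abs_div, abs_of_pos h2, abs_of_pos h3]
  rw [div_mul_eq_mul_div, div_le_iff₀ h2]
  nlinarith

lemma I_nonneg_bound (x : ℝ) (hx : 0 ≤ x) : I x ≤ K^2 / 2 := by
  have hmono : I x ≤ ∫ s in (0:ℝ)..x, K^2 * Real.exp (-2*s) := by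
    refine intervalIntegral.integral_mono_on hx ((cont_q.pow 2).intervalIntegrable 0 x)
      ((by continuity : Continuous fun s : ℝ => K^2 * Real.exp (-2*s)).intervalIntegrable 0 x)
      fun s hs => ?_
    have hs0 : 0 ≤ s := hs.1
    have h1 : q s ≤ K * Real.exp (-|s|) := q_le s
    have h2 : q s ^ 2 ≤ (K * Real.exp (-|s|)) ^ 2 :=
      pow_le_pow_left₀ (q_pos s).le h1 2
    calc q s ^ 2 ≤ (K * Real.exp (-|s|)) ^ 2 := h2
      _ = K^2 * Real.exp (-2*s) := by
          rw [abs_of_nonneg hs0, mul_pow, ← Real.exp_nat_mul]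
          norm_num
  have hFTC : (∫ s in (0:ℝ)..x, K^2 * Real.exp (-2*s))
      = -(K^2/2) * Real.exp (-2*x) - (-(K^2/2) * Real.exp (-2*0)) := by
    refine intervalIntegral.integral_eq_sub_of_hasDerivAt
      (f := fun s => -(K^2/2) * Real.exp (-2*s)) (fun s _ => ?_)
      ((by continuity : Continuous fun s : ℝ => K^2 * Real.exp (-2*s)).intervalIntegrable 0 x)
    have h := (((hasDerivAt_id s).const_mul (-2:ℝ)).exp).const_mul (-(K^2/2))
    refine h.congr_deriv (Eq.symm ?_)
    simp only [id_eq]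
    ring
  have hexp : 0 < Real.exp (-2*x) := Real.exp_pos _
  rw [hFTC] at hmono
  norm_num [Real.exp_zero] at hmono
  nlinarith [mul_nonneg (div_nonneg (sq_nonneg K) (by norm_num : (0:ℝ) ≤ 2))
    (Real.exp_pos (-(2*x))).le]

lemma I_bound (x : ℝ) : |I x| ≤ K^2 / 2 := by
  rcases le_or_gt 0 x with hx | hx
  · have h1 : 0 ≤ I x := intervalIntegral.integral_nonneg hx fun s _ => sq_nonneg _
    rw [abs_of_nonneg h1]; exact I_nonneg_bound x hx
  · have hx' : 0 ≤ -x := by linarith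
    have h1 : 0 ≤ I (-x) := intervalIntegral.integral_nonneg hx' fun s _ => sq_nonneg _
    have h2 := I_nonneg_bound (-x) hx'
    rw [I_odd] at h1 h2
    rw [abs_of_nonpos (by linarith)]
    linarith

def a0 (x : ℝ) : ℝ := (1/3) * q1 x * I x - (2/3) * q x ^ 3
def b1 (x : ℝ) : ℝ := (1/3) * (q x - q x ^ 4) * I x - (5/3) * q x ^ 2 * q1 x
def b2 (x : ℝ) : ℝ := (1/3) * ((q1 x - 4 * q x ^ 3 * q1 x) * I x + (q x - q x ^ 4) * q x ^ 2)
  - (5/3) * (2 * q x * q1 x * q1 x + q x ^ 2 * (q x - q x ^ 4))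

lemma hasDerivAt_a0 (x : ℝ) : HasDerivAt a0 (b1 x) x := by
  show HasDerivAt (fun y => (1/3) * q1 y * I y - (2/3) * q y ^ 3) (b1 x) x
  have h := (((hasDerivAt_q1 x).const_mul (1/3:ℝ)).mul (hasDerivAt_I x)).sub
    (((hasDerivAt_q x).pow 3).const_mul (2/3:ℝ))
  refine h.congr_deriv (Eq.symm ?_)
  simp only [b1]
  push_cast
  ring

lemma hasDerivAt_b1 (x : ℝ) : HasDerivAt b1 (b2 x) x := by
  show HasDerivAt (fun y => (1/3) * (q y - q y ^ 4) * I y - (5/3) * q y ^ 2 * q1 y) (b2 x) x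
  have h := ((((hasDerivAt_q x).sub ((hasDerivAt_q x).pow 4)).const_mul
    ((1:ℝ)/3)).mul (hasDerivAt_I x)).sub
    ((((hasDerivAt_q x).pow 2).const_mul ((5:ℝ)/3)).mul (hasDerivAt_q1 x))
  refine h.congr_deriv (Eq.symm ?_)
  simp only [b2, Pi.pow_apply, Pi.sub_apply]
  push_cast
  ring

end QA

/-- For the quartic soliton `Q(x) = (5/2)^{1/3} cosh(3x/2)^{-2/3}`, the function
`A = (1/3) Q' ∫₀ˣ Q² - (2/3) Q³` solves `A'' - A + 4Q³A + 4Q³ = 0`, is even,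
and decays exponentially. -/
theorem quartic_A_equation (Q A : ℝ → ℝ)
    (hQ : ∀ x : ℝ, Q x = ((5 : ℝ) / 2) ^ ((1 : ℝ) / 3) *
      (Real.cosh (3 * x / 2)) ^ (-(2 : ℝ) / 3))
    (hA : ∀ x : ℝ, A x =
      (1 / 3) * deriv Q x * (∫ s in (0 : ℝ)..x, (Q s) ^ 2) - (2 / 3) * Q x ^ 3) :
    (∀ x : ℝ, deriv (deriv A) x - A x + 4 * Q x ^ 3 * A x + 4 * Q x ^ 3 = 0) ∧
    (∀ x : ℝ, A (-x) = A x) ∧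
    (∃ C γ : ℝ, 0 < C ∧ 0 < γ ∧ ∀ x : ℝ, |A x| ≤ C * Real.exp (-γ * |x|)) := by
  have hQq : Q = QA.q := funext fun x => by rw [hQ x]; rfl
  have hdQ : deriv Q = QA.q1 := by
    rw [hQq]; funext y; exact (QA.hasDerivAt_q y).deriv
  have hAeq : A = QA.a0 := by
    funext y; rw [hA y, hdQ, hQq]; rfl
  refine ⟨fun x => ?_, fun x => ?_, ?_⟩
  · rw [hAeq, hQq]
    have hd1 : deriv QA.a0 = QA.b1 := funext fun y => (QA.hasDerivAt_a0 y).deriv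
    rw [hd1, (QA.hasDerivAt_b1 x).deriv]
    simp only [QA.a0, QA.b1, QA.b2]
    linear_combination (-(10:ℝ)/3 * QA.q x) * QA.energy x
  · rw [hAeq]
    simp only [QA.a0]
    rw [QA.q1_odd, QA.I_odd, QA.q_even]
    ring
  · refine ⟨QA.K ^ 3, 1, pow_pos QA.K_pos 3, one_pos, fun x => ?_⟩
    rw [hAeq, neg_one_mul]
    have h1 := QA.abs_q1_le x
    have h2 := QA.q_le x
    have h3 := QA.I_bound x
    have h4 := QA.q_pos x
    have h5 := QA.K_pos
    have hep : 0 < Real.exp (-|x|) := Real.exp_pos _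
    have hep1 : Real.exp (-|x|) ≤ 1 :=
      Real.exp_le_one_iff.2 (neg_nonpos.2 (abs_nonneg x))
    have htri : |QA.a0 x| ≤ (1/3) * |QA.q1 x| * |QA.I x| + (2/3) * QA.q x ^ 3 := by
      simp only [QA.a0]
      calc |(1/3) * QA.q1 x * QA.I x - (2/3) * QA.q x ^ 3|
          ≤ |(1/3) * QA.q1 x * QA.I x| + |(2/3) * QA.q x ^ 3| := abs_sub _ _
        _ = (1/3) * |QA.q1 x| * |QA.I x| + (2/3) * QA.q x ^ 3 := by
            rw [abs_mul, abs_mul, abs_mul, abs_of_pos (pow_pos h4 3)]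
            norm_num [abs_div]
    have hq1e : |QA.q1 x| ≤ QA.K * Real.exp (-|x|) := h1.trans h2
    have hprod : (1/3) * |QA.q1 x| * |QA.I x|
        ≤ (1/3) * (QA.K * Real.exp (-|x|)) * (QA.K^2 / 2) := by
      have := mul_le_mul hq1e h3 (abs_nonneg _) (by positivity)
      nlinarith [this]
    have he3 : Real.exp (-|x|) ^ 3 ≤ Real.exp (-|x|) :=
      pow_le_of_le_one hep.le hep1 three_ne_zero
    have hq3 : QA.q x ^ 3 ≤ QA.K ^ 3 * Real.exp (-|x|) := by
      have hh : QA.q x ^ 3 ≤ (QA.K * Real.exp (-|x|)) ^ 3 :=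
        pow_le_pow_left₀ h4.le h2 3
      calc QA.q x ^ 3 ≤ (QA.K * Real.exp (-|x|)) ^ 3 := hh
        _ = QA.K ^ 3 * Real.exp (-|x|) ^ 3 := by ring
        _ ≤ QA.K ^ 3 * Real.exp (-|x|) :=
            mul_le_mul_of_nonneg_left he3 (by positivity)
    nlinarith [mul_pos (pow_pos h5 3) hep]
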